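/- Let ξ₁ and ξ₂ be two distinct real roots of a nonzero polynomial p ∈ ℝ[u]. Then their Thom encodings differ, i.e., there exists k with 1 ≤ k ≤ deg p such that sign(p^{(k)}(ξ₁)) ≠ sign(p^{(k)}(ξ₂)). -/
import Mathlib

open Polynomial Set

private lemma sign_pos_of_sign_eq {x y : ℝ} (h : Real.sign x = Real.sign y) (hx : 0 < x) :
    0 < y := by
  rcases lt_trichotomy y 0 with hy | hy | hy
  · rw [Real.sign_of_pos hx, Real.sign_of_neg hy] at h; norm_num at h
  · rw [Real.sign_of_pos hx, hy, Real.sign_zero] at h; norm_num at h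
  · exact hy

private lemma sign_neg_of_sign_eq {x y : ℝ} (h : Real.sign x = Real.sign y) (hx : x < 0) :
    y < 0 := by
  rcases lt_trichotomy y 0 with hy | hy | hy
  · exact hy
  · rw [Real.sign_of_neg hx, hy, Real.sign_zero] at h; norm_num at h
  · rw [Real.sign_of_neg hx, Real.sign_of_pos hy] at h; norm_num at h

/-- Thom's lemma (interval version): if all derivatives of `q` up to its degree have the
same sign at `a` and `b`, then `q` keeps a constant sign on `[a, b]`. -/
private lemma thom_aux : ∀ (n : ℕ) (q : Polynomial ℝ), q.natDegree ≤ n → ∀ a b : ℝ, a < b →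
    (∀ k, k ≤ q.natDegree →
      Real.sign ((Polynomial.derivative^[k] q).eval a) =
      Real.sign ((Polynomial.derivative^[k] q).eval b)) →
    ∀ x ∈ Set.Icc a b, Real.sign (q.eval x) = Real.sign (q.eval a) := by
  intro n
  induction n with
  | zero =>
    intro q hq a b _ _ x _
    obtain ⟨c, rfl⟩ := Polynomial.natDegree_eq_zero.mp (Nat.le_zero.mp hq)
    simp
  | succ n ih =>
    intro q hq a b hab hsign x hx
    by_cases h0 : q.natDegree = 0
    · obtain ⟨c, rfl⟩ := Polynomial.natDegree_eq_zero.mp h0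
      simp
    -- apply induction hypothesis to q'
    have hq' : (derivative q).natDegree ≤ n := by
      have := Polynomial.natDegree_derivative_lt h0
      omega
    have hsign' : ∀ k, k ≤ (derivative q).natDegree →
        Real.sign ((Polynomial.derivative^[k] (derivative q)).eval a) =
        Real.sign ((Polynomial.derivative^[k] (derivative q)).eval b) := by
      intro k hk
      have : Polynomial.derivative^[k] (derivative q) = Polynomial.derivative^[k + 1] q := by
        rw [Function.iterate_succ_apply]
      rw [this]
      have hlt := Polynomial.natDegree_derivative_lt h0
      exact hsign (k + 1) (by omega)
    have key : ∀ y ∈ Set.Icc a b,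
        Real.sign ((derivative q).eval y) = Real.sign ((derivative q).eval a) :=
      ih (derivative q) hq' a b hab hsign'
    -- case on the sign of q' on the interval
    rcases lt_trichotomy ((derivative q).eval a) 0 with hs | hs | hs
    · -- q strictly decreasing on [a,b]
      have hneg : ∀ y ∈ Set.Ioo a b, deriv (fun t => q.eval t) y < 0 := by
        intro y hy
        rw [Polynomial.deriv]
        exact sign_neg_of_sign_eq (key y (Set.Ioo_subset_Icc_self hy)).symm hs
      have hanti : StrictAntiOn (fun t => q.eval t) (Set.Icc a b) := by
        apply strictAntiOn_of_deriv_neg (convex_Icc a b)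
          (q.continuous.continuousOn)
        intro y hy
        rw [interior_Icc] at hy
        exact hneg y hy
      have h1 : q.eval x ≤ q.eval a := by
        rcases eq_or_lt_of_le hx.1 with h | h
        · rw [← h]
        · exact (hanti (Set.left_mem_Icc.mpr hab.le) hx h).le
      have h2 : q.eval b ≤ q.eval x := by
        rcases eq_or_lt_of_le hx.2 with h | h
        · rw [h]
        · exact (hanti hx (Set.right_mem_Icc.mpr hab.le) h).le
      have hsb := hsign 0 (Nat.zero_le _)
      simp only [Function.iterate_zero, id] at hsb
      have hba : q.eval b < q.eval a :=
        hanti (Set.left_mem_Icc.mpr hab.le) (Set.right_mem_Icc.mpr hab.le) hab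
      rcases lt_trichotomy (q.eval a) 0 with ha | ha | ha
      · rw [Real.sign_of_neg ha, Real.sign_of_neg (lt_of_le_of_lt h1 ha)]
      · exfalso
        have hb : q.eval b = 0 := by
          rw [ha, Real.sign_zero] at hsb
          exact Real.sign_eq_zero_iff.mp hsb.symm
        linarith
      · have hb : 0 < q.eval b := sign_pos_of_sign_eq hsb ha
        rw [Real.sign_of_pos ha, Real.sign_of_pos (lt_of_lt_of_le hb h2)]
    · -- q' vanishes identically on [a,b] : contradiction with natDegree q ≠ 0
      exfalso
      have hz : ∀ y ∈ Set.Icc a b, (derivative q).eval y = 0 := by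
        intro y hy
        have := key y hy
        rw [hs, Real.sign_zero] at this
        exact Real.sign_eq_zero_iff.mp this
      have : derivative q = 0 := by
        apply Polynomial.eq_zero_of_infinite_isRoot
        apply Set.Infinite.mono (s := Set.Icc a b) _ (Set.Icc_infinite hab)
        intro y hy
        exact hz y hy
      exact h0 (Polynomial.natDegree_eq_zero_of_derivative_eq_zero this)
    · -- q strictly increasing on [a,b]
      have hpos : ∀ y ∈ Set.Ioo a b, 0 < deriv (fun t => q.eval t) y := by
        intro y hy
        rw [Polynomial.deriv]
        exact sign_pos_of_sign_eq (key y (Set.Ioo_subset_Icc_self hy)).symm hs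
      have hmono : StrictMonoOn (fun t => q.eval t) (Set.Icc a b) := by
        apply strictMonoOn_of_deriv_pos (convex_Icc a b)
          (q.continuous.continuousOn)
        intro y hy
        rw [interior_Icc] at hy
        exact hpos y hy
      have h1 : q.eval a ≤ q.eval x := by
        rcases eq_or_lt_of_le hx.1 with h | h
        · rw [← h]
        · exact (hmono (Set.left_mem_Icc.mpr hab.le) hx h).le
      have h2 : q.eval x ≤ q.eval b := by
        rcases eq_or_lt_of_le hx.2 with h | h
        · rw [h]
        · exact (hmono hx (Set.right_mem_Icc.mpr hab.le) h).le
      rcases lt_trichotomy (q.eval a) 0 with ha | ha | ha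
      · have hsb := hsign 0 (Nat.zero_le _)
        simp only [Function.iterate_zero, id] at hsb
        have hb : q.eval b < 0 := sign_neg_of_sign_eq hsb ha
        rw [Real.sign_of_neg ha, Real.sign_of_neg (lt_of_le_of_lt h2 hb)]
      · have hsb := hsign 0 (Nat.zero_le _)
        simp only [Function.iterate_zero, id] at hsb
        exfalso
        have hb : q.eval b = 0 := by
          rw [ha, Real.sign_zero] at hsb
          exact Real.sign_eq_zero_iff.mp hsb.symm
        have hba : q.eval a < q.eval b :=
          hmono (Set.left_mem_Icc.mpr hab.le) (Set.right_mem_Icc.mpr hab.le) hab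
        linarith
      · rw [Real.sign_of_pos ha, Real.sign_of_pos (lt_of_lt_of_le ha h1)]

/-- Two distinct real roots of a nonzero real polynomial have different Thom
encodings: there is a `k` with `1 ≤ k ≤ deg p` at which the signs of the `k`-th
derivatives differ. -/
theorem thom_encodings_differ (p : Polynomial ℝ) (hp : p ≠ 0)
    (ξ₁ ξ₂ : ℝ) (hξ : ξ₁ ≠ ξ₂) (h₁ : p.eval ξ₁ = 0) (h₂ : p.eval ξ₂ = 0) :
    ∃ k, 1 ≤ k ∧ k ≤ p.natDegree ∧
      Real.sign ((Polynomial.derivative^[k] p).eval ξ₁) ≠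
      Real.sign ((Polynomial.derivative^[k] p).eval ξ₂) := by
  by_contra hcon
  push_neg at hcon
  have hd : p.natDegree ≠ 0 := by
    intro h0
    obtain ⟨c, rfl⟩ := Polynomial.natDegree_eq_zero.mp h0
    simp at h₁
    simp [h₁] at hp
  -- WLOG ξ₁ < ξ₂
  have main : ∀ a b : ℝ, a < b → p.eval a = 0 → p.eval b = 0 →
      (∀ k, 1 ≤ k → k ≤ p.natDegree →
        Real.sign ((Polynomial.derivative^[k] p).eval a) =
        Real.sign ((Polynomial.derivative^[k] p).eval b)) → False := by
    intro a b hab ha hb hs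
    have hall : ∀ k, k ≤ p.natDegree →
        Real.sign ((Polynomial.derivative^[k] p).eval a) =
        Real.sign ((Polynomial.derivative^[k] p).eval b) := by
      intro k hk
      rcases Nat.eq_zero_or_pos k with rfl | hk1
      · simp [ha, hb]
      · exact hs k hk1 hk
    have := thom_aux p.natDegree p le_rfl a b hab hall
    -- derive a contradiction as in the inductive step, using q' sign constancy
    have hq' : (derivative p).natDegree ≤ p.natDegree - 1 := Polynomial.natDegree_derivative_le p
    have hsign' : ∀ k, k ≤ (derivative p).natDegree →
        Real.sign ((Polynomial.derivative^[k] (derivative p)).eval a) =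
        Real.sign ((Polynomial.derivative^[k] (derivative p)).eval b) := by
      intro k hk
      have heq : Polynomial.derivative^[k] (derivative p) = Polynomial.derivative^[k + 1] p := by
        rw [Function.iterate_succ_apply]
      rw [heq]
      have := Polynomial.natDegree_derivative_lt hd
      exact hs (k + 1) (by omega) (by omega)
    have key : ∀ y ∈ Set.Icc a b,
        Real.sign ((derivative p).eval y) = Real.sign ((derivative p).eval a) :=
      thom_aux (derivative p).natDegree (derivative p) le_rfl a b hab hsign'
    rcases lt_trichotomy ((derivative p).eval a) 0 with hs0 | hs0 | hs0
    · have hanti : StrictAntiOn (fun t => p.eval t) (Set.Icc a b) := by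
        apply strictAntiOn_of_deriv_neg (convex_Icc a b) (p.continuous.continuousOn)
        intro y hy
        rw [interior_Icc] at hy
        rw [Polynomial.deriv]
        exact sign_neg_of_sign_eq (key y (Set.Ioo_subset_Icc_self hy)).symm hs0
      have hba : p.eval b < p.eval a :=
        hanti (Set.left_mem_Icc.mpr hab.le) (Set.right_mem_Icc.mpr hab.le) hab
      rw [ha, hb] at hba; exact lt_irrefl 0 hba
    · have hz : ∀ y ∈ Set.Icc a b, (derivative p).eval y = 0 := by
        intro y hy
        have := key y hy
        rw [hs0, Real.sign_zero] at this
        exact Real.sign_eq_zero_iff.mp this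
      have hder0 : derivative p = 0 := by
        apply Polynomial.eq_zero_of_infinite_isRoot
        apply Set.Infinite.mono (s := Set.Icc a b) _ (Set.Icc_infinite hab)
        intro y hy
        exact hz y hy
      exact hd (Polynomial.natDegree_eq_zero_of_derivative_eq_zero hder0)
    · have hmono : StrictMonoOn (fun t => p.eval t) (Set.Icc a b) := by
        apply strictMonoOn_of_deriv_pos (convex_Icc a b) (p.continuous.continuousOn)
        intro y hy
        rw [interior_Icc] at hy
        rw [Polynomial.deriv]
        exact sign_pos_of_sign_eq (key y (Set.Ioo_subset_Icc_self hy)).symm hs0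
      have hba : p.eval a < p.eval b :=
        hmono (Set.left_mem_Icc.mpr hab.le) (Set.right_mem_Icc.mpr hab.le) hab
      rw [ha, hb] at hba; exact lt_irrefl 0 hba
  rcases lt_or_gt_of_ne hξ with h | h
  · exact main ξ₁ ξ₂ h h₁ h₂ (fun k hk1 hk2 => hcon k hk1 hk2)
  · exact main ξ₂ ξ₁ h h₂ h₁ (fun k hk1 hk2 => (hcon k hk1 hk2).symm)
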